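/- If the base category C is univalent and has coproducts, then the category HSS(H,θ) of heterogeneous substitution systems for a signature (H,θ) is univalent. -/

import Mathlib

open CategoryTheory Limits

universe v u

/-- A pointed endofunctor on `C`. -/
structure Ptd (C : Type u) [Category.{v} C] where
  Z : C ⥤ C
  e : 𝟭 C ⟶ Z

/-- A *signature* over `C`: an endofunctor `H` on the endofunctor category `[C,C]`
together with a strength `θ : (H −)·U∼ ⟶ H (−·U∼)`, natural in both variables and
satisfying the unit and composition coherence laws (here `X·Z` is the composite
`Z ⋙ X`, i.e. `A ↦ X (Z A)`). -/
structure Signature (C : Type u) [Category.{v} C] where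
  H : (C ⥤ C) ⥤ (C ⥤ C)
  θ : ∀ (X : C ⥤ C) (Z : Ptd C), (Z.Z ⋙ H.obj X) ⟶ H.obj (Z.Z ⋙ X)
  θ_nat_X : ∀ {X X' : C ⥤ C} (α : X ⟶ X') (Z : Ptd C),
      Functor.whiskerLeft Z.Z (H.map α) ≫ θ X' Z = θ X Z ≫ H.map (Functor.whiskerLeft Z.Z α)
  θ_nat_Z : ∀ (X : C ⥤ C) {Z Z' : Ptd C} (g : Z.Z ⟶ Z'.Z), Z.e ≫ g = Z'.e →
      Functor.whiskerRight g (H.obj X) ≫ θ X Z' = θ X Z ≫ H.map (Functor.whiskerRight g X)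
  θ_id : ∀ X : C ⥤ C,
      θ X ⟨𝟭 C, 𝟙 (𝟭 C)⟩ =
        (Functor.leftUnitor (H.obj X)).hom ≫ H.map (Functor.leftUnitor X).inv
  θ_comp : ∀ (X : C ⥤ C) (Z Z' : Ptd C),
      θ X ⟨Z.Z ⋙ Z'.Z, Z.e ≫ Functor.whiskerLeft Z.Z Z'.e⟩ =
        (Functor.associator Z.Z Z'.Z (H.obj X)).hom ≫
          Functor.whiskerLeft Z.Z (θ X Z') ≫ θ (Z'.Z ⋙ X) Z ≫
          H.map (Functor.associator Z.Z Z'.Z X).inv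

variable {C : Type u} [Category.{v} C]

/-- A *heterogeneous substitution system* for a signature `(H, θ)`:
an `(Id + H)`-algebra, presented by its components `η : Id ⟶ T` and `τ : H T ⟶ T`,
together with, for every morphism of pointed endofunctors `f : (Z,e) ⟶ (T,η)`,
a unique bracket `⦃f⦄ : T·Z ⟶ T` satisfying the two substitution equations. -/
structure HSS (S : Signature C) where
  T : C ⥤ C
  η : 𝟭 C ⟶ T
  τ : S.H.obj T ⟶ T
  bracket : ∀ (Z : Ptd C) (f : Z.Z ⟶ T), Z.e ≫ f = η → (Z.Z ⋙ T ⟶ T)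
  bracket_η : ∀ (Z : Ptd C) (f : Z.Z ⟶ T) (hf : Z.e ≫ f = η),
      Functor.whiskerLeft Z.Z η ≫ bracket Z f hf = f
  bracket_τ : ∀ (Z : Ptd C) (f : Z.Z ⟶ T) (hf : Z.e ≫ f = η),
      Functor.whiskerLeft Z.Z τ ≫ bracket Z f hf = S.θ T Z ≫ S.H.map (bracket Z f hf) ≫ τ
  bracket_unique : ∀ (Z : Ptd C) (f : Z.Z ⟶ T) (hf : Z.e ≫ f = η)
      (h : Z.Z ⋙ T ⟶ T),
      Functor.whiskerLeft Z.Z η ≫ h = f →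
      Functor.whiskerLeft Z.Z τ ≫ h = S.θ T Z ≫ S.H.map h ≫ τ →
      h = bracket Z f hf

/-- A morphism of heterogeneous substitution systems: an `(Id+H)`-algebra morphism
compatible with the brackets on either side. -/
structure HSSHom {S : Signature C} (A B : HSS S) where
  β : A.T ⟶ B.T
  hη : A.η ≫ β = B.η
  hτ : A.τ ≫ β = S.H.map β ≫ B.τ
  hbr : ∀ (Z : Ptd C) (f : Z.Z ⟶ A.T) (hf : Z.e ≫ f = A.η)
      (hf' : Z.e ≫ (f ≫ β) = B.η),
    A.bracket Z f hf ≫ β = Functor.whiskerLeft Z.Z β ≫ B.bracket Z (f ≫ β) hf'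

theorem HSSHom.ext' {S : Signature C} {A B : HSS S} (g h : HSSHom A B)
    (w : g.β = h.β) : g = h := by
  cases g; cases h; cases w; rfl

instance HSScat (S : Signature C) : Category (HSS S) where
  Hom := HSSHom
  id A := { β := 𝟙 A.T
            hη := Category.comp_id _
            hτ := by simp
            hbr := by intro Z f hf hf'; simp }
  comp {A B D} g h :=
    { β := g.β ≫ h.β
      hη := by rw [← Category.assoc, g.hη, h.hη]
      hτ := by rw [← Category.assoc, g.hτ, Category.assoc, h.hτ, ← Category.assoc,
        ← Functor.map_comp]
      hbr := by
        intro Z f hf hf'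
        have h1 : Z.e ≫ (f ≫ g.β) = B.η := by rw [← Category.assoc, hf, g.hη]
        have h2 : Z.e ≫ ((f ≫ g.β) ≫ h.β) = D.η := by
          rw [← Category.assoc, h1, h.hη]
        rw [← Category.assoc, g.hbr Z f hf h1, Category.assoc,
          h.hbr Z (f ≫ g.β) h1 h2]
        simp }
  id_comp g := HSSHom.ext' _ _ (Category.id_comp g.β)
  comp_id g := HSSHom.ext' _ _ (Category.comp_id g.β)
  assoc f g h := HSSHom.ext' _ _ (Category.assoc f.β g.β h.β)

/-- A category is *univalent* if for all objects `a b` the canonical map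
`idtoiso : (a = b) → (a ≅ b)` (in Mathlib: `eqToIso`) is an equivalence of types. -/
def IsUnivalent (D : Type u) [Category.{v} D] : Prop :=
  ∀ a b : D, Function.Bijective (fun p : a = b => eqToIso p)

/-- Functor-category univalence, surjectivity part. -/
lemma functor_univalent_surj (hC : IsUnivalent C) {F G : C ⥤ C} (α : F ≅ G) :
    ∃ p : F = G, eqToHom p = α.hom := by
  have hp : ∀ X : C, ∃ q : F.obj X = G.obj X, eqToIso q = α.app X := fun X =>
    (hC (F.obj X) (G.obj X)).2 (α.app X)
  choose q hq using hp
  have hq' : ∀ X, eqToHom (q X) = α.hom.app X := fun X =>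
    congrArg Iso.hom (hq X)
  have p : F = G := by
    refine CategoryTheory.Functor.ext q (fun X Y f => ?_)
    have hn := α.hom.naturality f
    have h2 : eqToHom (q X) ≫ G.map f ≫ eqToHom (q Y).symm
        = F.map f ≫ eqToHom (q Y) ≫ eqToHom (q Y).symm := by
      rw [hq' X, hq' Y, ← Category.assoc, ← hn, Category.assoc]
    simpa using h2.symm
  refine ⟨p, ?_⟩
  ext X
  rw [eqToHom_app, ← hq' X]

/-- Extensionality for heterogeneous substitution systems. -/
lemma HSS.ext_aux {S : Signature C} {A B : HSS S} (hT : A.T = B.T)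
    (hη : A.η ≫ eqToHom hT = B.η)
    (hτ : A.τ ≫ eqToHom hT = S.H.map (eqToHom hT) ≫ B.τ) : A = B := by
  obtain ⟨T, η, τ, br, h1, h2, h3⟩ := A
  obtain ⟨T', η', τ', br', h1', h2', h3'⟩ := B
  dsimp at hT
  subst hT
  simp only [eqToHom_refl, Category.comp_id, CategoryTheory.Functor.map_id,
    Category.id_comp] at hη hτ
  subst hη; subst hτ
  have hbr : br = br' := by
    funext Z f hf
    exact h3' Z f hf (br Z f hf) (h1 Z f hf) (h2 Z f hf)
  subst hbr
  rfl

/-- **If the base category `C` is univalent, then the category `HSS(H,θ)` of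
heterogeneous substitution systems for a signature `(H,θ)` is univalent.** -/
theorem hss_univalent (hC : IsUnivalent C) (S : Signature C) :
    IsUnivalent (HSS S) := by
  intro A B
  constructor
  · intro p q _
    exact Subsingleton.elim p q
  · intro e
    -- the underlying natural isomorphism of endofunctors
    have hβ1 : e.hom.β ≫ e.inv.β = 𝟙 A.T := congrArg HSSHom.β e.hom_inv_id
    have hβ2 : e.inv.β ≫ e.hom.β = 𝟙 B.T := congrArg HSSHom.β e.inv_hom_id
    obtain ⟨p, hp⟩ := functor_univalent_surj hC
      (⟨e.hom.β, e.inv.β, hβ1, hβ2⟩ : A.T ≅ B.T)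
    have hAB : A = B := by
      apply HSS.ext_aux p
      · rw [hp]; exact e.hom.hη
      · rw [hp]; exact e.hom.hτ
    refine ⟨hAB, ?_⟩
    apply Iso.ext
    apply HSSHom.ext'
    show (eqToHom hAB : HSSHom A B).β = e.hom.β
    have key : ∀ {X Y : HSS S} (h : X = Y),
        (eqToHom h : HSSHom X Y).β = eqToHom (congrArg HSS.T h) := by
      intro X Y h; cases h; rfl
    rw [key hAB]
    exact hp
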